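/- If the binary packet-loss process {Z_t} is stationary (for every k, (Z_1,…,Z_n) and (Z_{1+k},…,Z_{n+k}) have the same joint distribution), then the expected rank function E_r(t) := E[rk(R_{r,t}·Z_t)], where Z_t = diag(Z_1,…,Z_t), is monotonically nondecreasing and concave in t for every r. -/

import Mathlib

open MeasureTheory

/-- Expected rank `E_r(t) = E[rk(R_{r,t}·diag(Z_1,…,Z_t))]`, where `R_{r,t}` is an
`r × t` uniformly random matrix over `F` (independent of the loss process) and the loss
process is distributed according to `μ`. -/
noncomputable def Estat (F : Type) [Field F] [Fintype F] [DecidableEq F]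
    (μ : Measure (ℕ → Bool)) (r t : ℕ) : ℝ :=
  ∫ ω, ((∑ R : Matrix (Fin r) (Fin t) F,
      ((R * Matrix.diagonal (fun j : Fin t => if ω (j : ℕ) then (1 : F) else 0)).rank : ℝ)) /
    (Fintype.card (Matrix (Fin r) (Fin t) F) : ℝ)) ∂μ

namespace EstatAux

open Finset Matrix
open scoped Classical

variable {F : Type} [Field F] [Fintype F] [DecidableEq F]

lemma range_snoc {α : Type*} {n : ℕ} (f : Fin n → α) (a : α) :
    Set.range (Fin.snoc f a : Fin (n+1) → α) = insert a (Set.range f) := by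
  ext x
  constructor
  · rintro ⟨j, rfl⟩
    induction j using Fin.lastCases with
    | last => left; simp
    | cast j => right; exact ⟨j, by simp⟩
  · rintro (rfl | ⟨j, rfl⟩)
    · exact ⟨Fin.last n, by simp⟩
    · exact ⟨j.castSucc, by simp⟩

/-- append a column on the right -/
def app {r s : ℕ} (M : Matrix (Fin r) (Fin s) F) (c : Fin r → F) :
    Matrix (Fin r) (Fin (s+1)) F := fun i => Fin.snoc (M i) (c i)

lemma app_transpose {r s : ℕ} (M : Matrix (Fin r) (Fin s) F) (c : Fin r → F) :
    (app M c)ᵀ = Fin.snoc (Mᵀ) c := by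
  funext j i
  induction j using Fin.lastCases with
  | last => simp [app, Matrix.transpose_apply]; exact (congrFun (Fin.snoc_last (α := fun _ => Fin r → F) (p := Mᵀ) (x := c)) i).symm
  | cast j => simp [app, Matrix.transpose_apply]; exact (congrFun (Fin.snoc_castSucc (α := fun _ => Fin r → F) (p := Mᵀ) (x := c) (i := j)) i).symm

lemma rank_app {r s : ℕ} (M : Matrix (Fin r) (Fin s) F) (c : Fin r → F) :
    (app M c).rank = M.rank + (if c ∈ LinearMap.range M.mulVecLin then 0 else 1) := by
  have hr : LinearMap.range (app M c).mulVecLin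
      = LinearMap.range M.mulVecLin ⊔ (Submodule.span F {c}) := by
    rw [Matrix.range_mulVecLin, Matrix.range_mulVecLin, show (app M c).col = (app M c)ᵀ from rfl, app_transpose, range_snoc (α := Fin r → F) (f := Mᵀ),
      Submodule.span_insert, sup_comm]
    rfl
  rw [Matrix.rank, Matrix.rank, hr]
  by_cases hc : c ∈ LinearMap.range M.mulVecLin
  · rw [if_pos hc, sup_eq_left.mpr ((Submodule.span_singleton_le_iff_mem _ _).mpr hc), add_zero]
  · rw [if_neg hc]
    have hc0 : c ≠ 0 := fun h => hc (h ▸ (LinearMap.range M.mulVecLin).zero_mem)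
    have hinf : LinearMap.range M.mulVecLin ⊓ Submodule.span F {c} = ⊥ := by
      rw [eq_bot_iff]
      rintro x ⟨hx1, hx2⟩
      obtain ⟨a, rfl⟩ := Submodule.mem_span_singleton.mp hx2
      rcases eq_or_ne a 0 with rfl | ha
      · simp
      · exfalso
        apply hc
        have := (LinearMap.range M.mulVecLin).smul_mem a⁻¹ hx1
        rwa [smul_smul, inv_mul_cancel₀ ha, one_smul] at this
    have := Submodule.finrank_sup_add_finrank_inf_eq
      (LinearMap.range M.mulVecLin) (Submodule.span F {c})
    rw [hinf, finrank_bot, add_zero, finrank_span_singleton hc0] at this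
    omega

lemma card_range_mulVecLin {r s : ℕ} (M : Matrix (Fin r) (Fin s) F) :
    (Finset.univ.filter (fun c : Fin r → F => c ∈ LinearMap.range M.mulVecLin)).card
      = Fintype.card F ^ M.rank := by
  classical
  rw [← Fintype.card_subtype]
  have := Module.card_eq_pow_finrank (K := F) (V := ↥(LinearMap.range M.mulVecLin))
  rw [Matrix.rank]
  convert this using 2

end EstatAux

namespace EstatAux
open Finset Matrix
open scoped Classical

variable {F : Type} [Field F] [Fintype F] [DecidableEq F]

lemma card_matrix (r s : ℕ) :
    Fintype.card (Matrix (Fin r) (Fin s) F) = Fintype.card F ^ (r * s) := by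
  have : Fintype.card (Matrix (Fin r) (Fin s) F) = Fintype.card (Fin r → Fin s → F) :=
    Fintype.card_congr (Equiv.refl _)
  rw [this]
  simp only [Fintype.card_fun, Fintype.card_fin, ← pow_mul]
  ring_nf

/-- splitting off the last column as an equiv -/
def appEquiv (r s : ℕ) : (Matrix (Fin r) (Fin s) F × (Fin r → F)) ≃ Matrix (Fin r) (Fin (s+1)) F where
  toFun p := app p.1 p.2
  invFun R := (fun i j => R i j.castSucc, fun i => R i (Fin.last s))
  left_inv p := by
    ext i j
    · simp [app]
    · simp [app]
  right_inv R := by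
    funext i j
    induction j using Fin.lastCases with
    | last => simp [app]
    | cast j => simp [app]

/-- the column-sum computation -/
lemma sum_col_phi {r s : ℕ} (A : Matrix (Fin r) (Fin s) F) (φ : ℕ → ℝ) :
    ∑ c : Fin r → F, φ ((app A c).rank)
      = (Fintype.card F : ℝ) ^ A.rank * φ A.rank
        + ((Fintype.card F : ℝ) ^ r - (Fintype.card F : ℝ) ^ A.rank) * φ (A.rank + 1) := by
  have h1 : ∀ c : Fin r → F, φ ((app A c).rank)
      = if c ∈ LinearMap.range A.mulVecLin then φ A.rank else φ (A.rank + 1) := by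
    intro c
    rw [rank_app]
    by_cases hc : c ∈ LinearMap.range A.mulVecLin <;> simp [hc]
  simp_rw [h1]
  rw [Finset.sum_ite, Finset.sum_const, Finset.sum_const, Finset.filter_not,
    Finset.card_sdiff_of_subset (Finset.filter_subset _ _), card_range_mulVecLin]
  have hle : Fintype.card F ^ A.rank ≤ (Finset.univ : Finset (Fin r → F)).card := by
    rw [← card_range_mulVecLin A]
    exact Finset.card_filter_le _ _
  rw [nsmul_eq_mul, nsmul_eq_mul, Nat.cast_sub hle]
  have : ((Finset.univ : Finset (Fin r → F)).card : ℝ) = (Fintype.card F : ℝ) ^ r := by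
    rw [Finset.card_univ, Fintype.card_fun]
    simp
  rw [this]
  push_cast
  ring

end EstatAux

namespace EstatAux
open Finset Matrix
open scoped Classical

variable {F : Type} [Field F] [Fintype F] [DecidableEq F]

/-- `∑_{M : r×c} φ(rank M)` -/
noncomputable def PS (F : Type) [Field F] [Fintype F] [DecidableEq F] (r : ℕ) (φ : ℕ → ℝ) (c : ℕ) : ℝ :=
  ∑ M : Matrix (Fin r) (Fin c) F, φ M.rank

/-- the "one more column" function -/
noncomputable def psi (F : Type) [Field F] [Fintype F] (r : ℕ) (φ : ℕ → ℝ) (ρ : ℕ) : ℝ :=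
  (Fintype.card F : ℝ) ^ ρ * φ ρ + ((Fintype.card F : ℝ) ^ r - (Fintype.card F : ℝ) ^ ρ) * φ (ρ + 1)

lemma sum_app {r s : ℕ} (f : Matrix (Fin r) (Fin (s+1)) F → ℝ) :
    ∑ R : Matrix (Fin r) (Fin (s+1)) F, f R
      = ∑ M : Matrix (Fin r) (Fin s) F, ∑ c : Fin r → F, f (app M c) := by
  rw [← Equiv.sum_comp (appEquiv r s) f, Fintype.sum_prod_type]
  rfl

lemma PS_succ (r : ℕ) (φ : ℕ → ℝ) (c : ℕ) :
    PS F r φ (c + 1) = PS F r (psi F r φ) c := by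
  rw [PS, PS, sum_app (fun M => φ M.rank)]
  exact Finset.sum_congr rfl fun M _ => by rw [sum_col_phi M φ]; rfl

lemma mul_diag_app {r t : ℕ} (M : Matrix (Fin r) (Fin t) F) (col : Fin r → F)
    (z : Fin (t+1) → Bool) :
    app M col * Matrix.diagonal (fun j => if z j then (1:F) else 0)
      = app (M * Matrix.diagonal (fun j : Fin t => if z j.castSucc then (1:F) else 0))
          (fun i => if z (Fin.last t) then col i else 0) := by
  funext i j
  rw [Matrix.mul_diagonal]
  simp only [app]
  induction j using Fin.lastCases with
  | last =>
    rw [Fin.snoc_last, Fin.snoc_last]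
    by_cases h : z (Fin.last t) <;> simp [h]
  | cast j =>
    rw [Fin.snoc_castSucc, Fin.snoc_castSucc, Matrix.mul_diagonal]

lemma count_succ {t : ℕ} (z : Fin (t+1) → Bool) :
    (univ.filter (fun j => z j = true)).card
      = (univ.filter (fun j : Fin t => z j.castSucc = true)).card
        + (if z (Fin.last t) then 1 else 0) := by
  rw [Finset.card_filter, Finset.card_filter, Fin.sum_univ_castSucc]

lemma count_le {t : ℕ} (z : Fin t → Bool) :
    (univ.filter (fun j => z j = true)).card ≤ t := by
  exact (Finset.card_filter_le _ _).trans (by simp)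

/-- Main reduction: the sum over random matrices only depends on the number of `true`s. -/
lemma sum_phi_eq (r : ℕ) : ∀ (t : ℕ) (φ : ℕ → ℝ) (z : Fin t → Bool),
    ∑ R : Matrix (Fin r) (Fin t) F,
        φ ((R * Matrix.diagonal (fun j => if z j then (1:F) else 0)).rank)
      = (Fintype.card F : ℝ) ^ (r * (t - (univ.filter (fun j => z j = true)).card))
          * PS F r φ ((univ.filter (fun j => z j = true)).card) := by
  intro t
  induction t with
  | zero =>
    intro φ z
    have hc : (univ.filter (fun j : Fin 0 => z j = true)).card = 0 := by simp
    rw [hc, Nat.sub_zero, Nat.mul_zero, pow_zero, one_mul, PS]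
    refine Finset.sum_congr rfl fun R _ => ?_
    have hRD : R * Matrix.diagonal (fun j : Fin 0 => if z j then (1:F) else 0) = R := by
      funext i j
      exact j.elim0
    rw [hRD]
  | succ t ih =>
    intro φ z
    have hcount := count_succ z
    have hle : (univ.filter (fun j : Fin t => z j.castSucc = true)).card ≤ t := count_le _
    refine (sum_app (r := r) (s := t) (fun (R : Matrix (Fin r) (Fin (t+1)) F) => φ ((R * Matrix.diagonal (fun j => if z j then (1:F) else 0)).rank))).trans ?_
    simp_rw [mul_diag_app]
    by_cases hb : z (Fin.last t)
    · simp only [hb, if_true] at hcount ⊢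
      have : ∀ M : Matrix (Fin r) (Fin t) F, ∑ c : Fin r → F,
          φ ((app (M * Matrix.diagonal fun j : Fin t => if z j.castSucc then (1:F) else 0) c).rank)
          = psi F r φ ((M * Matrix.diagonal fun j : Fin t => if z j.castSucc then (1:F) else 0).rank) := by
        intro M
        rw [sum_col_phi]; rfl
      rw [Finset.sum_congr rfl fun M _ => this M, ih (psi F r φ)
        (fun j => z j.castSucc), ← PS_succ, hcount]
      have he : t + 1 - ((univ.filter (fun j : Fin t => z j.castSucc = true)).card + 1)
          = t - (univ.filter (fun j : Fin t => z j.castSucc = true)).card := by omega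
      rw [he]
    · rw [Bool.not_eq_true] at hb
      simp only [hb, Bool.false_eq_true, if_false] at hcount ⊢
      have : ∀ (M : Matrix (Fin r) (Fin t) F) (c : Fin r → F),
          (app (M * Matrix.diagonal fun j : Fin t => if z j.castSucc then (1:F) else 0) (fun _ => (0:F))).rank
          = (M * Matrix.diagonal fun j : Fin t => if z j.castSucc then (1:F) else 0).rank := by
        intro M c
        rw [rank_app, if_pos, add_zero]
        exact (LinearMap.range _).zero_mem
      simp_rw [fun M => this M 0, Finset.sum_const, Finset.card_univ, nsmul_eq_mul]
      rw [← Finset.mul_sum, ih φ (fun j => z j.castSucc), hcount, add_zero, Fintype.card_fun]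
      rw [Fintype.card_fin]
      push_cast
      rw [← mul_assoc, ← pow_add]
      have he : r + r * (t - (univ.filter (fun j : Fin t => z j.castSucc = true)).card)
          = r * (t + 1 - (univ.filter (fun j : Fin t => z j.castSucc = true)).card) := by
        rw [Nat.succ_sub hle, Nat.mul_succ]
        omega
      rw [he]

end EstatAux

namespace EstatAux
open Finset Matrix
open scoped Classical

variable (F : Type) [Field F] [Fintype F] [DecidableEq F]

noncomputable def gf (r s : ℕ) : ℝ :=
  PS F r (fun ρ => (ρ : ℝ)) s / (Fintype.card F : ℝ) ^ (r * s)

noncomputable def Tf (r s : ℕ) : ℝ :=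
  PS F r (fun ρ => (Fintype.card F : ℝ) ^ ρ) s

variable {F}

lemma hq1 : (1 : ℝ) ≤ (Fintype.card F : ℝ) := by
  exact_mod_cast Fintype.card_pos

lemma hq0 : (0 : ℝ) < (Fintype.card F : ℝ) := lt_of_lt_of_le one_pos hq1

lemma PS_cast_succ (r s : ℕ) :
    PS F r (fun ρ => (ρ : ℝ)) (s + 1)
      = (Fintype.card F : ℝ) ^ r * PS F r (fun ρ => (ρ : ℝ)) s
        + (Fintype.card F : ℝ) ^ (r * (s + 1)) - Tf F r s := by
  rw [PS_succ, PS, PS, Tf, PS]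
  have : ∀ M : Matrix (Fin r) (Fin s) F,
      psi F r (fun ρ => (ρ : ℝ)) M.rank
        = (Fintype.card F : ℝ) ^ r * (M.rank : ℝ) + (Fintype.card F : ℝ) ^ r
          - (Fintype.card F : ℝ) ^ M.rank := by
    intro M
    rw [psi]
    push_cast
    ring
  rw [Finset.sum_congr rfl fun M _ => this M, Finset.sum_sub_distrib, Finset.sum_add_distrib,
    ← Finset.mul_sum, Finset.sum_const, Finset.card_univ, card_matrix, nsmul_eq_mul]
  push_cast
  rw [← pow_add, show r * s + r = r * (s + 1) by ring]

lemma Tf_le (r s : ℕ) : Tf F r s ≤ (Fintype.card F : ℝ) ^ (r * (s + 1)) := by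
  rw [Tf, PS]
  calc ∑ M : Matrix (Fin r) (Fin s) F, (Fintype.card F : ℝ) ^ M.rank
      ≤ ∑ _M : Matrix (Fin r) (Fin s) F, (Fintype.card F : ℝ) ^ r := by
        refine Finset.sum_le_sum fun M _ => ?_
        exact pow_le_pow_right₀ hq1 M.rank_le_height
    _ = (Fintype.card F : ℝ) ^ (r * (s + 1)) := by
        rw [Finset.sum_const, Finset.card_univ, card_matrix, nsmul_eq_mul]
        push_cast
        rw [← pow_add, show r * s + r = r * (s + 1) by ring]

lemma Tf_succ_ge (r s : ℕ) :
    (Fintype.card F : ℝ) ^ r * Tf F r s ≤ Tf F r (s + 1) := by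
  rw [Tf, Tf, PS_succ, PS, PS, Finset.mul_sum]
  refine Finset.sum_le_sum fun M _ => ?_
  rw [psi]
  set q : ℝ := (Fintype.card F : ℝ)
  set a : ℝ := q ^ M.rank with ha
  have h1 : (1:ℝ) ≤ q := hq1
  have hab : a ≤ q ^ r := pow_le_pow_right₀ hq1 M.rank_le_height
  have ha0 : 0 < a := pow_pos hq0 _
  have hfold : q ^ (M.rank + 1) = a * q := by rw [pow_succ]
  rw [hfold]
  nlinarith [mul_nonneg (mul_nonneg (sub_nonneg.mpr hab) (sub_nonneg.mpr h1)) ha0.le]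

lemma Tf_nonneg (r s : ℕ) : 0 ≤ Tf F r s := by
  rw [Tf, PS]
  exact Finset.sum_nonneg fun M _ => (pow_pos hq0 _).le

lemma gf_succ (r s : ℕ) :
    gf F r (s + 1) = gf F r s + 1
      - Tf F r s / (Fintype.card F : ℝ) ^ (r * (s + 1)) := by
  rw [gf, gf, PS_cast_succ]
  have h1 : ((Fintype.card F : ℝ)) ^ (r * (s+1)) ≠ 0 := (pow_pos hq0 _).ne'
  have h2 : ((Fintype.card F : ℝ)) ^ (r * s) ≠ 0 := (pow_pos hq0 _).ne'
  field_simp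
  rw [show r * (s + 1) = r * s + r by ring, pow_add]
  ring

lemma gf_mono_succ (r s : ℕ) : gf F r s ≤ gf F r (s + 1) := by
  rw [gf_succ]
  have : Tf F r s / (Fintype.card F : ℝ) ^ (r * (s + 1)) ≤ 1 := by
    rw [div_le_one (pow_pos hq0 _)]
    exact Tf_le r s
  linarith

lemma gf_concave_succ (r s : ℕ) :
    gf F r (s + 2) - gf F r (s + 1) ≤ gf F r (s + 1) - gf F r s := by
  rw [gf_succ r (s+1), gf_succ r s]
  have key : Tf F r s / (Fintype.card F : ℝ) ^ (r * (s + 1))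
      ≤ Tf F r (s + 1) / (Fintype.card F : ℝ) ^ (r * (s + 2)) := by
    rw [div_le_div_iff₀ (pow_pos hq0 _) (pow_pos hq0 _)]
    calc Tf F r s * (Fintype.card F : ℝ) ^ (r * (s + 2))
        = ((Fintype.card F : ℝ) ^ r * Tf F r s) * (Fintype.card F : ℝ) ^ (r * (s + 1)) := by
          rw [show r * (s + 2) = r + r * (s + 1) by ring, pow_add]
          ring
      _ ≤ Tf F r (s + 1) * (Fintype.card F : ℝ) ^ (r * (s + 1)) := by
          exact mul_le_mul_of_nonneg_right (Tf_succ_ge r s) (pow_pos hq0 _).le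
  linarith

lemma gf_mono (r : ℕ) : Monotone (gf F r) := monotone_nat_of_le_succ (gf_mono_succ r)

lemma gf_increment_anti (r : ℕ) : Antitone (fun s => gf F r (s + 1) - gf F r s) :=
  antitone_nat_of_succ_le fun s => gf_concave_succ r s

lemma gf_increment_le {r : ℕ} {m' m b : ℕ} (hm : m' ≤ m) (hb : b ≤ 1) :
    gf F r (m + b) - gf F r m ≤ gf F r (m' + b) - gf F r m' := by
  interval_cases b
  · simp
  · exact gf_increment_anti r hm

lemma gf_nonneg (r s : ℕ) : 0 ≤ gf F r s := by
  rw [gf]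
  refine div_nonneg ?_ (pow_pos hq0 _).le
  rw [PS]
  exact Finset.sum_nonneg fun M _ => by positivity

lemma gf_le (r s : ℕ) : gf F r s ≤ r := by
  rw [gf, div_le_iff₀ (pow_pos hq0 _), PS]
  calc ∑ M : Matrix (Fin r) (Fin s) F, (M.rank : ℝ)
      ≤ ∑ _M : Matrix (Fin r) (Fin s) F, (r : ℝ) := by
        refine Finset.sum_le_sum fun M _ => ?_
        exact_mod_cast M.rank_le_height
    _ = (r : ℝ) * (Fintype.card F : ℝ) ^ (r * s) := by
        rw [Finset.sum_const, Finset.card_univ, card_matrix, nsmul_eq_mul]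
        push_cast
        ring

end EstatAux

namespace EstatAux
open Finset Matrix MeasureTheory
open scoped Classical

variable {F : Type} [Field F] [Fintype F] [DecidableEq F]

/-- number of `true`s among `ω k, ω (k+1), …, ω (k+m-1)` -/
def Ncount (k m : ℕ) (ω : ℕ → Bool) : ℕ :=
  ((Finset.range m).filter (fun i => ω (i + k) = true)).card

lemma Ncount_eq_sum (k m : ℕ) (ω : ℕ → Bool) :
    Ncount k m ω = ∑ i ∈ Finset.range m, (if ω (i + k) then 1 else 0) := by
  rw [Ncount, Finset.card_filter]

lemma Ncount_succ (k m : ℕ) (ω : ℕ → Bool) :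
    Ncount k (m + 1) ω = Ncount k m ω + (if ω (m + k) then 1 else 0) := by
  rw [Ncount_eq_sum, Ncount_eq_sum, Finset.sum_range_succ]

lemma Ncount_succ' (k m : ℕ) (ω : ℕ → Bool) :
    Ncount k (m + 1) ω = Ncount (k + 1) m ω + (if ω k then 1 else 0) := by
  rw [Ncount_eq_sum, Ncount_eq_sum, Finset.sum_range_succ']
  have h1 : ∀ i, (if ω (i + 1 + k) then (1:ℕ) else 0) = (if ω (i + (k + 1)) then 1 else 0) :=
    fun i => by rw [show i + 1 + k = i + (k + 1) by ring]
  rw [Finset.sum_congr rfl fun i _ => h1 i, Nat.zero_add]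

lemma Ncount_shift (m : ℕ) (ω : ℕ → Bool) :
    Ncount 0 m (fun n => ω (n + 1)) = Ncount 1 m ω := by
  rw [Ncount_eq_sum, Ncount_eq_sum]

lemma measurable_Ncount (k m : ℕ) : Measurable (fun ω : ℕ → Bool => Ncount k m ω) := by
  simp only [Ncount_eq_sum]
  refine Finset.measurable_sum _ fun i _ => ?_
  exact Measurable.comp (f := fun ω : ℕ → Bool => ω (i + k))
    (g := fun b : Bool => if b then 1 else 0)
    measurable_from_top (measurable_pi_apply (i + k))

lemma measurable_gf_Ncount (r k m : ℕ) :
    Measurable (fun ω : ℕ → Bool => gf F r (Ncount k m ω)) :=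
  Measurable.comp (g := fun n : ℕ => gf F r n) measurable_from_top (measurable_Ncount k m)

lemma integrable_gf_Ncount (μ : Measure (ℕ → Bool)) [IsProbabilityMeasure μ] (r k m : ℕ) :
    Integrable (fun ω : ℕ → Bool => gf F r (Ncount k m ω)) μ := by
  refine Integrable.mono' (integrable_const (r : ℝ))
    (measurable_gf_Ncount (F := F) r k m).aestronglyMeasurable ?_
  filter_upwards with ω
  rw [Real.norm_eq_abs, abs_of_nonneg (gf_nonneg r _)]
  exact gf_le r _

lemma count_fin_eq (t : ℕ) (ω : ℕ → Bool) :
    (Finset.univ.filter (fun j : Fin t => ω (j : ℕ) = true)).card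
      = Ncount 0 t ω := by
  rw [Finset.card_filter, Ncount_eq_sum]
  simp only [Nat.add_zero]
  exact Fin.sum_univ_eq_sum_range (fun i => if ω i = true then 1 else 0) t

end EstatAux
namespace EstatAux
open Finset Matrix
open scoped Classical

variable {F : Type} [Field F] [Fintype F] [DecidableEq F]

lemma Estat_eq (μ : Measure (ℕ → Bool)) (r t : ℕ) :
    Estat F μ r t = ∫ ω, gf F r (Ncount 0 t ω) ∂μ := by
  rw [Estat]
  congr 1
  funext ω
  have h := sum_phi_eq (F := F) r t (fun ρ => (ρ : ℝ)) (fun j => ω (j : ℕ))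
  rw [h, card_matrix, count_fin_eq]
  set N := Ncount 0 t ω with hN
  have hNle : N ≤ t := by
    rw [hN, Ncount]
    exact (Finset.card_filter_le _ _).trans (by simp)
  rw [gf]
  have hsplit : r * (t - N) + r * N = r * t := by
    rw [← Nat.mul_add, Nat.sub_add_cancel hNle]
  push_cast
  rw [← hsplit, pow_add]
  have h1 : ((Fintype.card F : ℝ)) ^ (r * (t - N)) ≠ 0 := pow_ne_zero _ (hq0 (F := F)).ne'
  have h2 : ((Fintype.card F : ℝ)) ^ (r * N) ≠ 0 := pow_ne_zero _ (hq0 (F := F)).ne'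
  field_simp

end EstatAux

/-- If the binary packet-loss process `{Z_t}` is stationary (its law `μ` is
shift invariant, so all its finite-dimensional distributions are shift invariant), then
`E_r(t) = E[rk(R_{r,t}·diag(Z_1,…,Z_t))]` is monotonically nondecreasing and concave
in `t` for every `r`. -/
theorem Estat_monotone_concave
    (F : Type) [Field F] [Fintype F] [DecidableEq F]
    (μ : Measure (ℕ → Bool)) [IsProbabilityMeasure μ]
    (hstat : ∀ k : ℕ, μ.map (fun ω n => ω (n + k)) = μ) (r : ℕ) :
    (∀ t : ℕ, Estat F μ r t ≤ Estat F μ r (t + 1))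
    ∧ ∀ t : ℕ, Estat F μ r (t + 2) - Estat F μ r (t + 1)
        ≤ Estat F μ r (t + 1) - Estat F μ r t := by
  open EstatAux in
  constructor
  · intro t
    rw [Estat_eq, Estat_eq]
    refine integral_mono (integrable_gf_Ncount μ r 0 t)
      (integrable_gf_Ncount μ r 0 (t + 1)) fun ω => ?_
    apply gf_mono r
    rw [Ncount_succ]
    exact Nat.le_add_right _ _
  · intro t
    rw [Estat_eq, Estat_eq, Estat_eq]
    rw [← integral_sub (integrable_gf_Ncount μ r 0 (t + 2)) (integrable_gf_Ncount μ r 0 (t + 1)),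
      ← integral_sub (integrable_gf_Ncount μ r 0 (t + 1)) (integrable_gf_Ncount μ r 0 t)]
    have hshift : Measurable (fun (ω : ℕ → Bool) (n : ℕ) => ω (n + 1)) :=
      measurable_pi_lambda _ fun n => measurable_pi_apply (n + 1)
    have key : ∫ ω, (gf F r (Ncount 0 (t + 1) ω) - gf F r (Ncount 0 t ω)) ∂μ
        = ∫ ω, (gf F r (Ncount 1 (t + 1) ω) - gf F r (Ncount 1 t ω)) ∂μ := by
      have hf : Measurable (fun ω : ℕ → Bool =>
          gf F r (Ncount 0 (t + 1) ω) - gf F r (Ncount 0 t ω)) :=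
        (measurable_gf_Ncount r 0 (t + 1)).sub (measurable_gf_Ncount r 0 t)
      have step1 : ∫ ω, (gf F r (Ncount 0 (t + 1) ω) - gf F r (Ncount 0 t ω)) ∂μ
          = ∫ ω, (gf F r (Ncount 0 (t + 1) ω) - gf F r (Ncount 0 t ω))
              ∂(μ.map (fun ω n => ω (n + 1))) := by rw [hstat 1]
      rw [step1, integral_map hshift.aemeasurable]
      · refine integral_congr_ae (Filter.Eventually.of_forall fun ω => ?_)
        simp only [Ncount_shift]
      · rw [hstat 1]
        exact hf.aestronglyMeasurable
    rw [key]
    refine integral_mono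
      ((integrable_gf_Ncount μ r 0 (t + 2)).sub (integrable_gf_Ncount μ r 0 (t + 1)))
      ((integrable_gf_Ncount μ r 1 (t + 1)).sub (integrable_gf_Ncount μ r 1 t))
      fun ω => ?_
    have e2 : Ncount 0 (t + 2) ω = Ncount 0 (t + 1) ω + (if ω (t + 1) then 1 else 0) := by
      have h := Ncount_succ 0 (t + 1) ω
      rwa [Nat.add_zero] at h
    have e1 : Ncount 1 (t + 1) ω = Ncount 1 t ω + (if ω (t + 1) then 1 else 0) :=
      Ncount_succ 1 t ω
    have hmm : Ncount 1 t ω ≤ Ncount 0 (t + 1) ω := by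
      rw [Ncount_succ' 0 t ω]
      exact Nat.le_add_right _ _
    have hb : (if ω (t + 1) then 1 else 0) ≤ 1 := by split <;> omega
    show gf F r (Ncount 0 (t + 2) ω) - gf F r (Ncount 0 (t + 1) ω)
        ≤ gf F r (Ncount 1 (t + 1) ω) - gf F r (Ncount 1 t ω)
    rw [e2, e1]
    exact gf_increment_le hmm hb
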